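/- Let Φ : ℕ×ℕ → ℂ be any function and let φ : ℕ → ℂ satisfy ∑_{j=0}^∞ |φ(j)|² < ∞. Then Φ(x,y) = ∑_{k=0}^∞ φ(x+k)φ(y+k) for all x,y ∈ ℕ if and only if both of the following hold: (a) Φ(x+1,y+1) − Φ(x,y) = −φ(x)φ(y) for all x,y ∈ ℕ; and (b) Φ(x,y) → 0 as x or y → ∞, i.e. for every ε > 0 there exists N such that |Φ(x,y)| < ε whenever x ≥ N or y ≥ N. -/

import Mathlib

open Filter Topology

/-- For `φ ∈ ℓ²`, a kernel `Φ : ℕ×ℕ → ℂ` equals the square-of-Hankel kernel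
`∑_k φ(x+k)φ(y+k)` if and only if it satisfies the discrete Lyapunov equation
`Φ(x+1,y+1) − Φ(x,y) = −φ(x)φ(y)` and vanishes at infinity. -/
theorem stmt_1 (Φ : ℕ → ℕ → ℂ) (φ : ℕ → ℂ)
    (hφ : Summable fun j : ℕ => ‖φ j‖ ^ 2) :
    (∀ x y : ℕ, Φ x y = ∑' k : ℕ, φ (x + k) * φ (y + k))
    ↔ ((∀ x y : ℕ, Φ (x + 1) (y + 1) - Φ x y = -(φ x * φ y))
        ∧ (∀ ε > (0 : ℝ), ∃ N : ℕ, ∀ x y : ℕ, (N ≤ x ∨ N ≤ y) → ‖Φ x y‖ < ε)) := by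
  set F : ℕ → ℕ → ℂ := fun x y => ∑' k : ℕ, φ (x + k) * φ (y + k) with hFdef
  -- tails of the square series
  have hsq : ∀ x : ℕ, Summable fun k : ℕ => ‖φ (x + k)‖ ^ 2 := fun x =>
    (hφ.comp_injective (add_right_injective x) : _)
  have hsqnn : ∀ x k : ℕ, (0:ℝ) ≤ ‖φ (x + k)‖ ^ 2 := fun x k => sq_nonneg _
  -- summability of the norms of products
  have hnormsumm : ∀ x y : ℕ, Summable fun k : ℕ => ‖φ (x + k)‖ * ‖φ (y + k)‖ := by
    intro x y
    apply Summable.of_nonneg_of_le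
      (fun k => mul_nonneg (norm_nonneg _) (norm_nonneg _)) (fun k => ?_)
      (((hsq x).add (hsq y)).div_const 2)
    have := sq_nonneg (‖φ (x + k)‖ - ‖φ (y + k)‖)
    nlinarith
  have hsumm : ∀ x y : ℕ, Summable fun k : ℕ => φ (x + k) * φ (y + k) := by
    intro x y
    apply Summable.of_norm
    simpa [norm_mul] using hnormsumm x y
  -- symmetry of F
  have hFsymm : ∀ x y : ℕ, F x y = F y x := by
    intro x y
    simp only [hFdef]
    exact tsum_congr fun k => mul_comm _ _
  -- F satisfies the Lyapunov equation
  have hFa : ∀ x y : ℕ, F (x + 1) (y + 1) - F x y = -(φ x * φ y) := by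
    intro x y
    have h0 : F x y = φ (x + 0) * φ (y + 0) + ∑' k : ℕ, φ (x + (k + 1)) * φ (y + (k + 1)) :=
      (hsumm x y).tsum_eq_zero_add
    have hsh : (∑' k : ℕ, φ (x + (k + 1)) * φ (y + (k + 1))) = F (x + 1) (y + 1) := by
      apply tsum_congr
      intro k
      congr 1 <;> congr 1 <;> omega
    rw [h0, hsh]
    simp only [Nat.add_zero]
    ring
  -- tail sums tend to 0
  have hT0 : Tendsto (fun x : ℕ => ∑' k : ℕ, ‖φ (x + k)‖ ^ 2) atTop (𝓝 0) := by
    have := tendsto_sum_nat_add (fun j => ‖φ j‖ ^ 2)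
    refine this.congr fun x => ?_
    exact tsum_congr fun k => by rw [add_comm]
  -- tail sums are bounded by the total sum
  set S : ℝ := ∑' j : ℕ, ‖φ j‖ ^ 2 with hSdef
  have hTleS : ∀ x : ℕ, (∑' k : ℕ, ‖φ (x + k)‖ ^ 2) ≤ S := by
    intro x
    exact Summable.tsum_le_tsum_of_inj (fun k => x + k) (add_right_injective x)
      (fun c _ => sq_nonneg _) (fun k => le_rfl) (hsq x) hφ
  have hSnn : (0:ℝ) ≤ S := tsum_nonneg fun j => sq_nonneg _
  -- decay of F when the first argument is large
  have hFdecay : ∀ ε > (0:ℝ), ∃ N : ℕ, ∀ x y : ℕ, N ≤ x → ‖F x y‖ < ε := by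
    intro ε hε
    set t : ℝ := ε / (S + 1) with htdef
    have ht : 0 < t := div_pos hε (by linarith)
    have htS : t * S / 2 < ε / 2 := by
      rw [htdef]
      rw [div_lt_div_iff₀ two_pos two_pos]
      have : ε / (S + 1) * S < ε := by
        rw [div_mul_eq_mul_div, div_lt_iff₀ (by linarith)]
        nlinarith
      nlinarith
    obtain ⟨N, hN⟩ : ∃ N : ℕ, ∀ x ≥ N, (∑' k : ℕ, ‖φ (x + k)‖ ^ 2) < ε * t := by
      have := (hT0.eventually (gt_mem_nhds (show (0:ℝ) < ε * t from mul_pos hε ht)))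
      exact this.exists_forall_of_atTop
    refine ⟨N, fun x y hx => ?_⟩
    have h1 : ‖F x y‖ ≤ ∑' k : ℕ, ‖φ (x + k)‖ * ‖φ (y + k)‖ := by
      calc ‖F x y‖ ≤ ∑' k : ℕ, ‖φ (x + k) * φ (y + k)‖ :=
            norm_tsum_le_tsum_norm (by simpa [norm_mul] using hnormsumm x y)
        _ = ∑' k : ℕ, ‖φ (x + k)‖ * ‖φ (y + k)‖ := by simp [norm_mul]
    have h2 : (∑' k : ℕ, ‖φ (x + k)‖ * ‖φ (y + k)‖)
        ≤ ∑' k : ℕ, (‖φ (x + k)‖ ^ 2 / (2 * t) + t * ‖φ (y + k)‖ ^ 2 / 2) := by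
      apply Summable.tsum_le_tsum _ (hnormsumm x y)
      · exact (((hsq x).div_const (2 * t)).add (((hsq y).mul_left t).div_const 2))
      · intro k
        have h := sq_nonneg (‖φ (x + k)‖ - t * ‖φ (y + k)‖)
        have h2t : (0:ℝ) < 2 * t := by linarith
        rw [div_add_div _ _ (ne_of_gt h2t) two_ne_zero, le_div_iff₀ (by positivity)]
        nlinarith
    have h3 : (∑' k : ℕ, (‖φ (x + k)‖ ^ 2 / (2 * t) + t * ‖φ (y + k)‖ ^ 2 / 2))
        = (∑' k : ℕ, ‖φ (x + k)‖ ^ 2) / (2 * t) + t * (∑' k : ℕ, ‖φ (y + k)‖ ^ 2) / 2 := by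
      rw [Summable.tsum_add (((hsq x).div_const (2 * t))) (((hsq y).mul_left t).div_const 2)]
      rw [tsum_div_const, ← tsum_mul_left, tsum_div_const]
    have hx' : (∑' k : ℕ, ‖φ (x + k)‖ ^ 2) / (2 * t) < ε / 2 := by
      rw [div_lt_iff₀ (by linarith)]
      calc (∑' k : ℕ, ‖φ (x + k)‖ ^ 2) < ε * t := hN x hx
        _ ≤ ε / 2 * (2 * t) := by ring_nf; linarith [le_refl (ε * t)]
    have hy' : t * (∑' k : ℕ, ‖φ (y + k)‖ ^ 2) / 2 ≤ t * S / 2 := by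
      have := hTleS y
      nlinarith
    calc ‖F x y‖ ≤ _ := h1
      _ ≤ _ := h2
      _ = _ := h3
      _ < ε / 2 + ε / 2 := by linarith
      _ = ε := by ring
  constructor
  · rintro hΦ
    have hΦF : ∀ x y, Φ x y = F x y := hΦ
    constructor
    · intro x y
      rw [hΦF, hΦF, hFa]
    · intro ε hε
      obtain ⟨N, hN⟩ := hFdecay ε hε
      refine ⟨N, fun x y hxy => ?_⟩
      rw [hΦF]
      rcases hxy with hx | hy
      · exact hN x y hx
      · rw [hFsymm]; exact hN y x hy
  · rintro ⟨ha, hb⟩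
    intro x y
    -- Φ(x,y) - F(x,y) is invariant under the diagonal shift
    have hshift : ∀ n : ℕ, Φ x y - F x y = Φ (x + n) (y + n) - F (x + n) (y + n) := by
      intro n
      induction n with
      | zero => simp
      | succ n ih =>
        have e1 := ha (x + n) (y + n)
        have e2 := hFa (x + n) (y + n)
        have : Φ (x + n + 1) (y + n + 1) - F (x + n + 1) (y + n + 1)
            = Φ (x + n) (y + n) - F (x + n) (y + n) := by
          have := e1.trans e2.symm
          linear_combination this
        rw [ih, ← this]
        congr 2 <;> omega
    have hzero : Φ x y - F x y = 0 := by
      by_contra h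
      have hpos : 0 < ‖Φ x y - F x y‖ := norm_pos_iff.mpr h
      obtain ⟨N1, hN1⟩ := hb (‖Φ x y - F x y‖ / 2) (by linarith)
      obtain ⟨N2, hN2⟩ := hFdecay (‖Φ x y - F x y‖ / 2) (by linarith)
      set n := max N1 N2 with hn
      have h1 : ‖Φ (x + n) (y + n)‖ < ‖Φ x y - F x y‖ / 2 :=
        hN1 _ _ (Or.inl (by omega))
      have h2 : ‖F (x + n) (y + n)‖ < ‖Φ x y - F x y‖ / 2 :=
        hN2 _ _ (by omega)
      have := hshift n
      have : ‖Φ x y - F x y‖ ≤ ‖Φ (x + n) (y + n)‖ + ‖F (x + n) (y + n)‖ := by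
        rw [this]
        exact norm_sub_le _ _
      linarith
    have := sub_eq_zero.mp hzero
    exact this
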